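/- Let M, N be von Neumann algebras with N a factor. Then the center of the von Neumann tensor product satisfies Z(M ⊗̄ N) = Z(M) ⊗̄ ℂ1. -/

import Mathlib

/- STATEMENT 15: for von Neumann algebras M, N with N a factor,
Z(M ⊗̄ N) = Z(M) ⊗̄ ℂ1 (Takesaki IV, Corollary 5.11); the tensor product is realized
spatially on the Hilbert space tensor product. -/

noncomputable section

/-- A spatial realization of the Hilbert space tensor product of `H` and `K` on `L`,
together with the two amplification `*`-homomorphisms `x ↦ x ⊗ 1` and `y ↦ 1 ⊗ y`. -/
structure HilbertTensor (H K L : Type*)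
    [NormedAddCommGroup H] [InnerProductSpace ℂ H] [CompleteSpace H]
    [NormedAddCommGroup K] [InnerProductSpace ℂ K] [CompleteSpace K]
    [NormedAddCommGroup L] [InnerProductSpace ℂ L] [CompleteSpace L] where
  tp : H →ₗ[ℂ] K →ₗ[ℂ] L
  inner_tp : ∀ (h h' : H) (k k' : K),
    (inner ℂ (tp h k) (tp h' k') : ℂ) = (inner ℂ h h' : ℂ) * (inner ℂ k k' : ℂ)
  dense_span : Dense (Submodule.span ℂ {z : L | ∃ h k, z = tp h k} : Set L)
  lAct : (H →L[ℂ] H) →⋆ₐ[ℂ] (L →L[ℂ] L)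
  rAct : (K →L[ℂ] K) →⋆ₐ[ℂ] (L →L[ℂ] L)
  lAct_tp : ∀ (x : H →L[ℂ] H) (h : H) (k : K), lAct x (tp h k) = tp (x h) k
  rAct_tp : ∀ (y : K →L[ℂ] K) (h : H) (k : K), rAct y (tp h k) = tp h (y k)

/-- The center of a subset of B(H), as a set: R ∩ R'. -/
def centerSet {E : Type*} [NormedAddCommGroup E] [InnerProductSpace ℂ E] [CompleteSpace E]
    (R : Set (E →L[ℂ] E)) : Set (E →L[ℂ] E) :=
  R ∩ Set.centralizer R

namespace HilbertTensor

variable {H K L : Type*}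
    [NormedAddCommGroup H] [InnerProductSpace ℂ H] [CompleteSpace H]
    [NormedAddCommGroup K] [InnerProductSpace ℂ K] [CompleteSpace K]
    [NormedAddCommGroup L] [InnerProductSpace ℂ L] [CompleteSpace L]
    (T : HilbertTensor H K L)

lemma norm_tp (h : H) (k : K) : ‖T.tp h k‖ = ‖h‖ * ‖k‖ := by
  have h1 := T.inner_tp h h k k
  rw [inner_self_eq_norm_sq_to_K, inner_self_eq_norm_sq_to_K, inner_self_eq_norm_sq_to_K] at h1
  have h2 : (‖T.tp h k‖ : ℝ) ^ 2 = (‖h‖ * ‖k‖) ^ 2 := by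
    rw [mul_pow]
    exact_mod_cast h1
  calc ‖T.tp h k‖ = Real.sqrt (‖T.tp h k‖ ^ 2) := (Real.sqrt_sq (norm_nonneg _)).symm
    _ = Real.sqrt ((‖h‖ * ‖k‖) ^ 2) := by rw [h2]
    _ = ‖h‖ * ‖k‖ := Real.sqrt_sq (mul_nonneg (norm_nonneg _) (norm_nonneg _))

/-- `k ↦ tp h k` as a continuous linear map. -/
def tpR (h : H) : K →L[ℂ] L :=
  LinearMap.mkContinuous (T.tp h) ‖h‖ fun k => le_of_eq (T.norm_tp h k)

@[simp] lemma tpR_apply (h : H) (k : K) : T.tpR h k = T.tp h k := rfl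

/-- `h ↦ tp h k` as a continuous linear map. -/
def tpL (k : K) : H →L[ℂ] L :=
  LinearMap.mkContinuous (T.tp.flip k) ‖k‖ fun h => by
    simpa [mul_comm] using le_of_eq (T.norm_tp h k)

@[simp] lemma tpL_apply (k : K) (h : H) : T.tpL k h = T.tp h k := rfl

/-- Two continuous linear maps on `L` agreeing on elementary tensors are equal. -/
lemma clm_ext {f g : L →L[ℂ] L} (hfg : ∀ h k, f (T.tp h k) = g (T.tp h k)) : f = g := by
  refine ContinuousLinearMap.ext_on T.dense_span ?_
  rintro x ⟨h, k, rfl⟩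
  exact hfg h k

/-- A vector orthogonal to all elementary tensors is zero. -/
lemma eq_zero_of_inner (v : L) (hv : ∀ h k, (inner ℂ (T.tp h k) v : ℂ) = 0) : v = 0 := by
  have h0 : (innerSL ℂ v : L →L[ℂ] ℂ) = 0 := by
    refine ContinuousLinearMap.ext_on T.dense_span ?_
    rintro x ⟨h, k, rfl⟩
    simp only [innerSL_apply_apply, ContinuousLinearMap.zero_apply]
    rw [← inner_conj_symm]
    simp [hv h k]
  have h1 : (inner ℂ v v : ℂ) = 0 := by
    have := DFunLike.congr_fun h0 v
    simpa using this
  exact inner_self_eq_zero.mp h1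

/-- The two amplifications commute. -/
lemma comm_lr (x : H →L[ℂ] H) (y : K →L[ℂ] K) :
    T.lAct x * T.rAct y = T.rAct y * T.lAct x := by
  apply T.clm_ext
  intro h k
  simp only [ContinuousLinearMap.mul_apply, T.lAct_tp, T.rAct_tp]

end HilbertTensor

open HilbertTensor in
theorem center_of_tensor_with_factor
    {H K L : Type*}
    [NormedAddCommGroup H] [InnerProductSpace ℂ H] [CompleteSpace H]
    [NormedAddCommGroup K] [InnerProductSpace ℂ K] [CompleteSpace K]
    [NormedAddCommGroup L] [InnerProductSpace ℂ L] [CompleteSpace L]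
    (T : HilbertTensor H K L) (M : VonNeumannAlgebra H) (N : VonNeumannAlgebra K)
    -- N is a factor
    (hNfactor : ∀ z ∈ N, (∀ x ∈ N, z * x = x * z) → ∃ c : ℂ, z = c • (1 : K →L[ℂ] K)) :
    centerSet (Set.centralizer (Set.centralizer
        ((⇑T.lAct '' (M : Set (H →L[ℂ] H))) ∪ (⇑T.rAct '' (N : Set (K →L[ℂ] K)))))) =
      ⇑T.lAct '' centerSet (M : Set (H →L[ℂ] H)) := by
  set R : Set (L →L[ℂ] L) :=
    (⇑T.lAct '' (M : Set (H →L[ℂ] H))) ∪ (⇑T.rAct '' (N : Set (K →L[ℂ] K))) with hR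
  by_cases hK : ∃ k₀ : K, ‖k₀‖ = 1
  · obtain ⟨k₀, hk₀⟩ := hK
    -- injectivity of lAct
    have hinj : ∀ a b : H →L[ℂ] H, T.lAct a = T.lAct b → a = b := by
      intro a b hab
      ext h
      have h1 : T.tp (a h) k₀ = T.tp (b h) k₀ := by
        have := DFunLike.congr_fun hab (T.tp h k₀)
        simpa [T.lAct_tp] using this
      have h2 : T.tp (a h - b h) k₀ = 0 := by
        rw [map_sub, LinearMap.sub_apply, h1, sub_self]
      have h3 := T.norm_tp (a h - b h) k₀
      rw [h2, hk₀, mul_one, norm_zero] at h3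
      have : a h - b h = 0 := by
        rwa [eq_comm, norm_eq_zero] at h3
      exact sub_eq_zero.mp this
    ext z
    constructor
    · rintro ⟨hz2, hz3⟩
      rw [Set.centralizer_centralizer_centralizer] at hz3
      have hz3' := Set.mem_centralizer_iff.mp hz3
      have hzl : ∀ m ∈ M, T.lAct m * z = z * T.lAct m := fun m hm =>
        hz3' _ (Or.inl ⟨m, hm, rfl⟩)
      have hzr : ∀ n ∈ N, T.rAct n * z = z * T.rAct n := fun n hn =>
        hz3' _ (Or.inr ⟨n, hn, rfl⟩)
      have hz2' := Set.mem_centralizer_iff.mp hz2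
      -- z commutes with rAct of the commutant of N
      have hzr' : ∀ y ∈ Set.centralizer (N : Set (K →L[ℂ] K)),
          T.rAct y * z = z * T.rAct y := by
        intro y hy
        refine hz2' _ (Set.mem_centralizer_iff.mpr ?_)
        rintro g (⟨m, hm, rfl⟩ | ⟨n, hn, rfl⟩)
        · exact T.comm_lr m y
        · rw [← map_mul, ← map_mul, hy n hn]
      -- z commutes with lAct of the commutant of M
      have hzl' : ∀ m ∈ Set.centralizer (M : Set (H →L[ℂ] H)),
          T.lAct m * z = z * T.lAct m := by
        intro m' hm'
        refine hz2' _ (Set.mem_centralizer_iff.mpr ?_)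
        rintro g (⟨m, hm, rfl⟩ | ⟨n, hn, rfl⟩)
        · rw [← map_mul, ← map_mul, hm' m hm]
        · exact (T.comm_lr m' n).symm
      -- slice operators
      set S : H → H → (K →L[ℂ] K) := fun h h' =>
        (ContinuousLinearMap.adjoint (T.tpR h')) ∘L z ∘L T.tpR h with hSdef
      have hS : ∀ h h' k k', (inner ℂ k' (S h h' k) : ℂ) = inner ℂ (T.tp h' k') (z (T.tp h k)) := by
        intro h h' k k'
        simp only [hSdef, ContinuousLinearMap.comp_apply,
          ContinuousLinearMap.adjoint_inner_right, tpR_apply]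
      -- if z commutes with rAct y then y commutes with S h h'
      have hScomm : ∀ (h h' : H) (y : K →L[ℂ] K),
          T.rAct y * z = z * T.rAct y → y * S h h' = S h h' * y := by
        intro h h' y hy
        ext k
        apply ext_inner_left ℂ
        intro k'
        have adj_eq : T.rAct (ContinuousLinearMap.adjoint y)
            = ContinuousLinearMap.adjoint (T.rAct y) := by
          rw [← ContinuousLinearMap.star_eq_adjoint, ← ContinuousLinearMap.star_eq_adjoint,
            map_star]
        calc (inner ℂ k' ((y * S h h') k) : ℂ)
            = inner ℂ (ContinuousLinearMap.adjoint y k') (S h h' k) := by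
              rw [ContinuousLinearMap.adjoint_inner_left]; rfl
          _ = inner ℂ (T.tp h' (ContinuousLinearMap.adjoint y k')) (z (T.tp h k)) := hS _ _ _ _
          _ = inner ℂ (T.rAct (ContinuousLinearMap.adjoint y) (T.tp h' k')) (z (T.tp h k)) := by
              rw [T.rAct_tp]
          _ = inner ℂ (ContinuousLinearMap.adjoint (T.rAct y) (T.tp h' k')) (z (T.tp h k)) := by
              rw [adj_eq]
          _ = inner ℂ (T.tp h' k') (T.rAct y (z (T.tp h k))) := by
              rw [ContinuousLinearMap.adjoint_inner_left]
          _ = inner ℂ (T.tp h' k') ((T.rAct y * z) (T.tp h k)) := rfl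
          _ = inner ℂ (T.tp h' k') ((z * T.rAct y) (T.tp h k)) := by rw [hy]
          _ = inner ℂ (T.tp h' k') (z (T.tp h (y k))) := by
              simp only [ContinuousLinearMap.mul_apply, T.rAct_tp]
          _ = inner ℂ k' (S h h' (y k)) := (hS _ _ _ _).symm
          _ = inner ℂ k' ((S h h' * y) k) := rfl
      -- S h h' lies in N
      have hSmem : ∀ h h', S h h' ∈ N := by
        intro h h'
        have : S h h' ∈ Set.centralizer (Set.centralizer (N : Set (K →L[ℂ] K))) := by
          refine Set.mem_centralizer_iff.mpr ?_
          intro y hy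
          exact hScomm h h' y (hzr' y hy)
        rwa [N.centralizer_centralizer] at this
      -- S h h' is scalar
      have hSc : ∀ h h', ∃ c : ℂ, S h h' = c • (1 : K →L[ℂ] K) := by
        intro h h'
        refine hNfactor _ (hSmem h h') ?_
        intro n hn
        exact (hScomm h h' n (hzr n hn)).symm
      -- the operator x on H
      set x : H →L[ℂ] H := (ContinuousLinearMap.adjoint (T.tpL k₀)) ∘L z ∘L T.tpL k₀ with hxdef
      have hx : ∀ h h', (inner ℂ h' (x h) : ℂ) = inner ℂ (T.tp h' k₀) (z (T.tp h k₀)) := by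
        intro h h'
        simp only [hxdef, ContinuousLinearMap.comp_apply,
          ContinuousLinearMap.adjoint_inner_right, tpL_apply]
      have hkey : ∀ h h' k k',
          (inner ℂ (T.tp h' k') (z (T.tp h k)) : ℂ) = inner ℂ h' (x h) * inner ℂ k' k := by
        intro h h' k k'
        obtain ⟨c, hc⟩ := hSc h h'
        have e1 : (inner ℂ k' (S h h' k) : ℂ) = c * inner ℂ k' k := by
          rw [hc]
          simp [inner_smul_right]
        have e0 : (inner ℂ k₀ (S h h' k₀) : ℂ) = c := by
          rw [hc]
          simp [inner_smul_right, inner_self_eq_norm_sq_to_K, hk₀]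
        have e2 : (inner ℂ h' (x h) : ℂ) = c := by rw [hx, ← hS, e0]
        rw [← hS, e1, e2]
      -- z = lAct x
      have hz_eq : z = T.lAct x := by
        apply T.clm_ext
        intro h k
        rw [T.lAct_tp]
        have horth : ∀ h' k', (inner ℂ (T.tp h' k') (z (T.tp h k) - T.tp (x h) k) : ℂ) = 0 := by
          intro h' k'
          rw [inner_sub_right, hkey, T.inner_tp, sub_self]
        exact sub_eq_zero.mp (T.eq_zero_of_inner _ horth)
      refine ⟨x, ⟨?_, ?_⟩, hz_eq.symm⟩
      · -- x ∈ M
        have : x ∈ Set.centralizer (Set.centralizer (M : Set (H →L[ℂ] H))) := by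
          refine Set.mem_centralizer_iff.mpr ?_
          intro m' hm'
          apply hinj
          rw [map_mul, map_mul]
          rw [← hz_eq]
          exact hzl' m' hm'
        rwa [M.centralizer_centralizer] at this
      · -- x ∈ M'
        refine Set.mem_centralizer_iff.mpr ?_
        intro m hm
        apply hinj
        rw [map_mul, map_mul, ← hz_eq]
        exact hzl m hm
    · rintro ⟨x, ⟨hxM, hxC⟩, rfl⟩
      have hxR' : T.lAct x ∈ Set.centralizer R := by
        refine Set.mem_centralizer_iff.mpr ?_
        rintro g (⟨m, hm, rfl⟩ | ⟨n, hn, rfl⟩)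
        · rw [← map_mul, ← map_mul, hxC m hm]
        · exact (T.comm_lr x n).symm
      constructor
      · refine Set.mem_centralizer_iff.mpr ?_
        intro g hg
        exact (Set.mem_centralizer_iff.mp hg _ (Or.inl ⟨x, hxM, rfl⟩)).symm
      · refine Set.mem_centralizer_iff.mpr ?_
        intro g hg
        exact (Set.mem_centralizer_iff.mp hg _ hxR').symm
  · -- degenerate case: K (hence L) is trivial
    have hK0 : ∀ k : K, k = 0 := by
      intro k
      by_contra hk
      exact hK ⟨‖k‖⁻¹ • k, by
        rw [norm_smul, norm_inv, norm_norm, inv_mul_cancel₀ (norm_ne_zero_iff.mpr hk)]⟩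
    have hL : ∀ v : L, v = 0 := by
      intro v
      have hsub : {w : L | ∃ h k, w = T.tp h k} ⊆ {0} := by
        rintro w ⟨h, k, rfl⟩
        rw [hK0 k]
        simp
      have hspan : (Submodule.span ℂ {w : L | ∃ h k, w = T.tp h k} : Set L) ⊆ {0} := by
        have : Submodule.span ℂ {w : L | ∃ h k, w = T.tp h k} ≤ ⊥ := by
          rw [Submodule.span_le]
          intro w hw
          simpa using hsub hw
        intro w hw
        simpa using this hw
      have := T.dense_span v
      have hcl : closure (Submodule.span ℂ {w : L | ∃ h k, w = T.tp h k} : Set L)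
          ⊆ closure ({0} : Set L) := closure_mono hspan
      rw [closure_singleton] at hcl
      simpa using hcl this
    have hop : ∀ f g : L →L[ℂ] L, f = g := by
      intro f g
      ext v
      rw [hL (f v), hL (g v)]
    ext z
    constructor
    · intro _
      refine ⟨1, ⟨M.one_mem, Set.mem_centralizer_iff.mpr fun m _ => by rw [mul_one, one_mul]⟩,
        hop _ _⟩
    · intro _
      exact ⟨Set.mem_centralizer_iff.mpr fun m _ => hop _ _,
        Set.mem_centralizer_iff.mpr fun m _ => hop _ _⟩
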